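/- Let f ∈ ℚ[x₁,…,xₙ] be a polynomial of degree 2d and suppose f = mᵀAm for some positive definite (invertible positive semidefinite) real symmetric matrix A, where m is the vector of monomials of degree ≤ d. Then f admits a Gram matrix with rational entries; in particular f is a sum of squares of polynomials with rational coefficients. -/

import Mathlib

open MvPolynomial

open Finset Matrix


lemma coeff_gram_sum {n : ℕ} {ι : Type} [Fintype ι] [DecidableEq ι] {R : Type*} [CommSemiring R]
    (m : ι → (Fin n →₀ ℕ)) (M : Matrix ι ι R) (s : Fin n →₀ ℕ) :
    MvPolynomial.coeff s (∑ i, ∑ j, M i j • (monomial (m i) (1:R) * monomial (m j) (1:R)))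
      = ∑ p ∈ Finset.univ.filter (fun p : ι × ι => m p.1 + m p.2 = s), M p.1 p.2 := by
  rw [Finset.sum_filter, ← Finset.sum_product']
  simp [MvPolynomial.coeff_sum, monomial_mul, coeff_monomial, mul_ite]

lemma rat_four_squares (q : ℚ) (hq : 0 ≤ q) : ∃ a : Fin 4 → ℚ, q = ∑ t, (a t)^2 := by
  obtain ⟨a, b, c, d, habcd⟩ := Nat.sum_four_squares (q.num.toNat * q.den)
  have hden : (q.den : ℚ) ≠ 0 := by exact_mod_cast q.den_nz
  refine ⟨![(a : ℚ)/q.den, (b:ℚ)/q.den, (c:ℚ)/q.den, (d:ℚ)/q.den], ?_⟩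
  have hnum : ((q.num.toNat : ℚ)) = (q.num : ℚ) := by
    exact_mod_cast congrArg (fun z : ℤ => (z : ℚ)) (Int.toNat_of_nonneg (Rat.num_nonneg.2 hq))
  have hq' : (q.num : ℚ) = q * q.den := by
    have h := Rat.num_div_den q
    rwa [div_eq_iff hden] at h
  have key : ((a:ℚ)^2+(b:ℚ)^2+(c:ℚ)^2+(d:ℚ)^2) = (q.num.toNat : ℚ) * q.den := by
    exact_mod_cast habcd
  rw [hnum, hq'] at key
  simp only [Fin.sum_univ_four, Matrix.cons_val_zero, Matrix.cons_val_one, Matrix.head_cons,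
    Matrix.cons_val_two, Matrix.cons_val_three, Matrix.tail_cons]
  field_simp
  linear_combination -key

lemma dot_expand {ι : Type} [Fintype ι] {R : Type*} [CommRing R]
    (M : Matrix ι ι R) (p : ι → R) :
    p ⬝ᵥ M *ᵥ p = ∑ i, ∑ j, M i j * (p i * p j) := by
  simp only [dotProduct, Matrix.mulVec, Finset.mul_sum]
  exact Finset.sum_congr rfl fun i _ => Finset.sum_congr rfl fun j _ => by ring

lemma gram_diag_identity {ι : Type} [Fintype ι] [DecidableEq ι] {R : Type*} [CommRing R]
    (Q D : Matrix ι ι R) (hD : ∀ k l, k ≠ l → D k l = 0) (p : ι → R) :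
    ∑ i, ∑ j, (Qᵀ * D * Q) i j * (p i * p j) = ∑ k, D k k * (∑ i, Q k i * p i)^2 := by
  have hDdiag : D = Matrix.diagonal (fun k => D k k) := by
    ext k l
    rcases eq_or_ne k l with rfl | h
    · simp
    · simp [Matrix.diagonal_apply_ne _ h, hD k l h]
  calc ∑ i, ∑ j, (Qᵀ * D * Q) i j * (p i * p j)
      = p ⬝ᵥ (Qᵀ * D * Q) *ᵥ p := (dot_expand _ _).symm
    _ = (Q *ᵥ p) ⬝ᵥ D *ᵥ (Q *ᵥ p) := by
        rw [← Matrix.mulVec_mulVec, ← Matrix.mulVec_mulVec, dotProduct_mulVec,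
          Matrix.vecMul_transpose]
    _ = ∑ k, D k k * (∑ i, Q k i * p i)^2 := by
        rw [hDdiag]
        simp only [dotProduct, Matrix.mulVec_diagonal]
        refine Finset.sum_congr rfl fun k _ => ?_
        simp only [Matrix.mulVec, dotProduct, Matrix.diagonal_apply_eq]
        ring


lemma posdef_bound {ι : Type} [Fintype ι] [DecidableEq ι] (A : Matrix ι ι ℝ) (hA : A.PosDef) :
    ∃ ε > 0, ∀ x : ι → ℝ, ε * ‖x‖ ^ 2 ≤ x ⬝ᵥ A *ᵥ x := by
  have hg : Continuous fun x : ι → ℝ => x ⬝ᵥ A *ᵥ x := by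
    simp only [dotProduct, Matrix.mulVec]
    exact continuous_finset_sum _ fun i _ => (continuous_apply i).mul
      (continuous_finset_sum _ fun j _ => continuous_const.mul (continuous_apply j))
  rcases isEmpty_or_nonempty ι with hι | hι
  · refine ⟨1, one_pos, fun x => ?_⟩
    have hx : x = 0 := Subsingleton.elim _ _
    simp [hx, dotProduct]
  · have hsne : (Metric.sphere (0 : ι → ℝ) 1).Nonempty := by
      refine ⟨fun _ => (1 : ℝ), ?_⟩
      rw [mem_sphere_zero_iff_norm]
      simpa using (Pi.norm_const (ι := ι) (1 : ℝ))
    obtain ⟨u₀, hu₀, hmin⟩ := (isCompact_sphere (0 : ι → ℝ) 1).exists_isMinOn hsne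
      hg.continuousOn
    have hu₀ne : u₀ ≠ 0 := by
      intro h
      rw [mem_sphere_zero_iff_norm, h, norm_zero] at hu₀
      exact one_ne_zero hu₀.symm
    refine ⟨u₀ ⬝ᵥ A *ᵥ u₀, by simpa using hA.dotProduct_mulVec_pos hu₀ne, fun x => ?_⟩
    rcases eq_or_ne x 0 with rfl | hx
    · simp [dotProduct]
    · set c : ℝ := ‖x‖ with hc
      have hcpos : 0 < c := norm_pos_iff.2 hx
      set u : ι → ℝ := c⁻¹ • x with hu
      have humem : u ∈ Metric.sphere (0 : ι → ℝ) 1 := by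
        rw [mem_sphere_zero_iff_norm, hu, norm_smul]
        simp [hc, abs_of_pos (inv_pos.2 hcpos), inv_mul_cancel₀ (ne_of_gt hcpos)]
        exact inv_mul_cancel₀ (ne_of_gt hcpos)
      have hxu : x = c • u := by
        rw [hu, smul_smul, mul_inv_cancel₀ (ne_of_gt hcpos), one_smul]
      have hscale : x ⬝ᵥ A *ᵥ x = c ^ 2 * (u ⬝ᵥ A *ᵥ u) := by
        rw [hxu, Matrix.mulVec_smul, smul_dotProduct, dotProduct_smul]
        simp [smul_eq_mul]; ring
      rw [hscale]
      have := hmin humem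
      have hc2 : (0:ℝ) ≤ c ^ 2 := sq_nonneg c
      calc u₀ ⬝ᵥ A *ᵥ u₀ * ‖x‖ ^ 2 = c ^ 2 * (u₀ ⬝ᵥ A *ᵥ u₀) := by rw [← hc]; ring
        _ ≤ c ^ 2 * (u ⬝ᵥ A *ᵥ u) := by
            exact mul_le_mul_of_nonneg_left this hc2

lemma quad_bound {ι : Type} [Fintype ι] (E : Matrix ι ι ℝ) (δ : ℝ) (hδ : 0 ≤ δ)
    (hE : ∀ i j, |E i j| ≤ δ) (x : ι → ℝ) :
    |x ⬝ᵥ E *ᵥ x| ≤ δ * (Fintype.card ι : ℝ)^2 * ‖x‖^2 := by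
  have hx : ∀ i, |x i| ≤ ‖x‖ := fun i => norm_le_pi_norm x i
  have habs : |x ⬝ᵥ E *ᵥ x| ≤ ∑ i, ∑ j, |x i * (E i j * x j)| := by
    have h1 : x ⬝ᵥ E *ᵥ x = ∑ i, ∑ j, x i * (E i j * x j) := by
      simp [dotProduct, Matrix.mulVec, Finset.mul_sum]
    rw [h1]
    refine (Finset.abs_sum_le_sum_abs _ _).trans ?_
    exact Finset.sum_le_sum fun i _ => Finset.abs_sum_le_sum_abs _ _
  refine habs.trans ?_
  have hterm : ∀ i j, |x i * (E i j * x j)| ≤ ‖x‖ * (δ * ‖x‖) := by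
    intro i j
    rw [abs_mul, abs_mul]
    exact mul_le_mul (hx i) (mul_le_mul (hE i j) (hx j) (abs_nonneg _) hδ)
      (by positivity) (norm_nonneg _)
  calc ∑ i, ∑ j, |x i * (E i j * x j)| ≤ ∑ i : ι, ∑ j : ι, ‖x‖ * (δ * ‖x‖) :=
        Finset.sum_le_sum fun i _ => Finset.sum_le_sum fun j _ => hterm i j
    _ = δ * (Fintype.card ι : ℝ)^2 * ‖x‖^2 := by
        simp [Finset.sum_const, Finset.card_univ]
        ring

theorem rational_gram_part1 (n : ℕ) (f : MvPolynomial (Fin n) ℚ)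
    (ι : Type) [Fintype ι] [DecidableEq ι]
    (m : ι → (Fin n →₀ ℕ))
    (A : Matrix ι ι ℝ) (hA : A.PosDef) (hAsym : A.IsSymm)
    (hGram : MvPolynomial.map (algebraMap ℚ ℝ) f
      = ∑ i, ∑ j, A i j • (monomial (m i) (1 : ℝ) * monomial (m j) (1 : ℝ))) :
    ∃ B : Matrix ι ι ℚ, B.IsSymm ∧ (B.map ((↑) : ℚ → ℝ)).PosSemidef ∧
      f = ∑ i, ∑ j, B i j • (monomial (m i) (1 : ℚ) * monomial (m j) (1 : ℚ)) := by
  classical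
  have hAs : ∀ i j, A j i = A i j := fun i j => congrFun (congrFun hAsym i) j
  set T : (Fin n →₀ ℕ) → Finset (ι × ι) :=
    fun s => Finset.univ.filter (fun p : ι × ι => m p.1 + m p.2 = s) with hT
  have hcoeff : ∀ s : Fin n →₀ ℕ, ((f.coeff s : ℚ) : ℝ) = ∑ p ∈ T s, A p.1 p.2 := by
    intro s
    have h := congrArg (MvPolynomial.coeff s) hGram
    rw [MvPolynomial.coeff_map, coeff_gram_sum] at h
    rw [← h, eq_ratCast (algebraMap ℚ ℝ)]
  obtain ⟨ε, hε, hAbound⟩ := posdef_bound A hA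
  set c : ℝ := (Fintype.card ι : ℝ) with hc
  have hc2 : (0:ℝ) ≤ c^2 := sq_nonneg c
  have hden : (0:ℝ) < 2 * c^2 + 1 := by positivity
  set δ : ℝ := ε / (2 * c^2 + 1) with hδ
  have hδpos : 0 < δ := div_pos hε hden
  have hδε : δ * (2 * c^2 + 1) = ε := div_mul_cancel₀ _ (ne_of_gt hden)
  choose q hq using fun i j : ι => exists_rat_near (A i j) hδpos
  set A' : ι → ι → ℚ := fun i j => (q i j + q j i) / 2 with hA'
  have hA'sym : ∀ i j, A' i j = A' j i := fun i j => by
    simp only [hA']; ring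
  have hA'close : ∀ i j, |A i j - ((A' i j : ℚ) : ℝ)| ≤ δ := by
    intro i j
    have h1 := hq i j
    have h2 := hq j i
    have key : A i j - ((A' i j : ℚ) : ℝ)
        = ((A i j - q i j) + (A j i - q j i)) / 2 := by
      rw [hAs i j]
      push_cast [hA']
      ring
    rw [key]
    calc |((A i j - q i j) + (A j i - q j i)) / 2|
        ≤ (|A i j - q i j| + |A j i - q j i|) / 2 := by
          rw [abs_div, abs_two]
          gcongr
          exact abs_add_le _ _
      _ ≤ δ := by linarith [le_of_lt h1, le_of_lt h2]
  set N : (Fin n →₀ ℕ) → ℚ := fun s => ((T s).card : ℚ) with hN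
  set Ee : (Fin n →₀ ℕ) → ℚ := fun s => (f.coeff s - ∑ p ∈ T s, A' p.1 p.2) / N s with hEe
  set B : Matrix ι ι ℚ := Matrix.of (fun i j => A' i j + Ee (m i + m j)) with hB
  have hmemT : ∀ i j : ι, (i, j) ∈ T (m i + m j) := by
    intro i j
    simp [hT]
  have hNpos : ∀ i j : ι, 0 < (T (m i + m j)).card :=
    fun i j => Finset.card_pos.2 ⟨_, hmemT i j⟩
  have hEcast : ∀ i j : ι, ((Ee (m i + m j) : ℚ) : ℝ)
      = (∑ p ∈ T (m i + m j), (A p.1 p.2 - ((A' p.1 p.2 : ℚ) : ℝ)))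
        / ((T (m i + m j)).card : ℝ) := by
    intro i j
    have h0 : ((Ee (m i + m j) : ℚ) : ℝ)
        = (((f.coeff (m i + m j) : ℚ) : ℝ) - ∑ p ∈ T (m i + m j), ((A' p.1 p.2 : ℚ) : ℝ))
          / ((T (m i + m j)).card : ℝ) := by
      simp only [hEe, hN]
      push_cast
      ring
    rw [h0, hcoeff, ← Finset.sum_sub_distrib]
  have hEbound : ∀ i j : ι, |((Ee (m i + m j) : ℚ) : ℝ)| ≤ δ := by
    intro i j
    have hcpos : (0:ℝ) < ((T (m i + m j)).card : ℝ) := by exact_mod_cast hNpos i j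
    rw [hEcast i j, abs_div, abs_of_pos hcpos, div_le_iff₀ hcpos]
    calc |∑ p ∈ T (m i + m j), (A p.1 p.2 - ((A' p.1 p.2 : ℚ) : ℝ))|
        ≤ ∑ p ∈ T (m i + m j), |A p.1 p.2 - ((A' p.1 p.2 : ℚ) : ℝ)| :=
          Finset.abs_sum_le_sum_abs _ _
      _ ≤ ∑ _p ∈ T (m i + m j), δ := Finset.sum_le_sum fun p _ => hA'close p.1 p.2
      _ = δ * ((T (m i + m j)).card : ℝ) := by
          rw [Finset.sum_const, nsmul_eq_mul]
          ring
  have hBclose : ∀ i j : ι, |A i j - ((B i j : ℚ) : ℝ)| ≤ 2 * δ := by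
    intro i j
    have hsplit : A i j - ((B i j : ℚ) : ℝ)
        = (A i j - ((A' i j : ℚ) : ℝ)) - ((Ee (m i + m j) : ℚ) : ℝ) := by
      simp only [hB, Matrix.of_apply]
      push_cast
      ring
    rw [hsplit]
    calc |(A i j - ((A' i j : ℚ) : ℝ)) - ((Ee (m i + m j) : ℚ) : ℝ)|
        ≤ |A i j - ((A' i j : ℚ) : ℝ)| + |((Ee (m i + m j) : ℚ) : ℝ)| := abs_sub _ _
      _ ≤ δ + δ := add_le_add (hA'close i j) (hEbound i j)
      _ = 2 * δ := by ring
  have hBsym : B.IsSymm := by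
    show Bᵀ = B
    ext i j
    simp only [Matrix.transpose_apply, hB, Matrix.of_apply]
    rw [hA'sym j i, add_comm (m j) (m i)]
  have hConstraint : ∀ s, f.coeff s = ∑ p ∈ T s, B p.1 p.2 := by
    intro s
    rcases Finset.eq_empty_or_nonempty (T s) with he | hne
    · rw [he, Finset.sum_empty]
      have h0 := hcoeff s
      rw [he, Finset.sum_empty] at h0
      exact_mod_cast h0
    · have hcardne : ((T s).card : ℚ) ≠ 0 := by
        exact_mod_cast (Finset.card_pos.2 hne).ne'
      have hBp : ∀ p ∈ T s, B p.1 p.2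
          = A' p.1 p.2 + (f.coeff s - ∑ p ∈ T s, A' p.1 p.2) / ((T s).card : ℚ) := by
        intro p hp
        have hps : m p.1 + m p.2 = s := by
          have := hp
          rw [hT, Finset.mem_filter] at this
          exact this.2
        simp only [hB, Matrix.of_apply, hEe, hN, hps]
      rw [Finset.sum_congr rfl hBp, Finset.sum_add_distrib, Finset.sum_const, nsmul_eq_mul]
      field_simp
      ring
  have hfB : f = ∑ i, ∑ j, B i j • (monomial (m i) (1:ℚ) * monomial (m j) (1:ℚ)) := by
    apply MvPolynomial.ext
    intro s
    rw [coeff_gram_sum]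
    exact hConstraint s
  have hherm : (B.map ((↑) : ℚ → ℝ)).IsHermitian := by
    show _ᴴ = _
    ext i j
    simp only [Matrix.conjTranspose_apply, Matrix.map_apply, star_trivial]
    exact_mod_cast congrFun (congrFun hBsym i) j
  refine ⟨B, hBsym, .of_dotProduct_mulVec_nonneg hherm ?_, hfB⟩
  intro x
  have hEmat : ∀ i j, |(A - B.map ((↑) : ℚ → ℝ)) i j| ≤ 2 * δ := by
    intro i j
    simpa [Matrix.sub_apply, Matrix.map_apply] using hBclose i j
  have hqb := quad_bound (A - B.map ((↑) : ℚ → ℝ)) (2 * δ) (by positivity) hEmat x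
  have hsplit : x ⬝ᵥ (B.map ((↑) : ℚ → ℝ)) *ᵥ x
      = x ⬝ᵥ A *ᵥ x - x ⬝ᵥ (A - B.map ((↑) : ℚ → ℝ)) *ᵥ x := by
    rw [Matrix.sub_mulVec, dotProduct_sub]
    ring
  have h1 := hAbound x
  have h2 : x ⬝ᵥ (A - B.map ((↑) : ℚ → ℝ)) *ᵥ x ≤ 2 * δ * c^2 * ‖x‖^2 := by
    refine (le_abs_self _).trans (hqb.trans ?_)
    rw [← hc]
  have hkey : 2 * δ * c^2 ≤ ε := by linarith [hδpos]
  have hstar : star x = x := by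
    funext i
    simp
  rw [hstar, hsplit]
  nlinarith [sq_nonneg ‖x‖]


lemma sos_of_rat_gram {n : ℕ} {ι : Type} [Fintype ι] [DecidableEq ι]
    (f : MvPolynomial (Fin n) ℚ) (m : ι → (Fin n →₀ ℕ)) (B : Matrix ι ι ℚ)
    (hsym : B.IsSymm)
    (hpsd : (B.map ((↑) : ℚ → ℝ)).PosSemidef)
    (hf : f = ∑ i, ∑ j, B i j • (monomial (m i) (1:ℚ) * monomial (m j) (1:ℚ))) :
    ∃ (k : ℕ) (p : Fin k → MvPolynomial (Fin n) ℚ), f = ∑ i, (p i)^2 := by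
  haveI : Invertible (2 : ℚ) := invertibleOfNonzero (by norm_num)
  have hBs : ∀ i j, B j i = B i j := fun i j => congrFun (congrFun hsym i) j
  set F := Matrix.toBilin' B with hFdef
  have hFsymm : F.IsSymm := by
    constructor
    intro x y
    simp only [RingHom.id_apply, hFdef, Matrix.toBilin'_apply]
    rw [Finset.sum_comm]
    exact Finset.sum_congr rfl fun j _ => Finset.sum_congr rfl fun i _ => by
      rw [hBs i j]; ring
  obtain ⟨v, hv⟩ := LinearMap.BilinForm.exists_orthogonal_basis (LinearMap.BilinForm.isSymm_iff.mp hFsymm)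
  have hcard : Fintype.card ι = Module.finrank ℚ (ι → ℚ) :=
    (Module.finrank_fintype_fun_eq_card ℚ).symm
  let e : ι ≃ Fin (Module.finrank ℚ (ι → ℚ)) := Fintype.equivFinOfCardEq hcard
  let w : Module.Basis ι ℚ (ι → ℚ) := v.reindex e.symm
  have hwv : ∀ k, w k = v (e k) := by
    intro k; simp [w, Module.Basis.reindex_apply]
  have hw : ∀ k l, k ≠ l → F (w k) (w l) = 0 := by
    intro k l hkl
    rw [hwv, hwv]
    exact hv (show e k ≠ e l from fun h => hkl (e.injective h))
  let P : Matrix ι ι ℚ := (Pi.basisFun ℚ ι).toMatrix ⇑w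
  haveI hPinv : Invertible P := (Pi.basisFun ℚ ι).invertibleToMatrix w
  haveI hPTinv : Invertible Pᵀ := Matrix.invertibleTranspose P
  have hPapp : ∀ i k, P i k = w k i := by
    intro i k
    simp [P, Module.Basis.toMatrix_apply]
  set D := Pᵀ * B * P with hDdef
  have hDF : ∀ k l, D k l = F (w k) (w l) := by
    intro k l
    simp only [hDdef, Matrix.mul_apply, Matrix.transpose_apply, Finset.sum_mul, hFdef,
      Matrix.toBilin'_apply, hPapp]
    rw [Finset.sum_comm]
  have hDoff : ∀ k l, k ≠ l → D k l = 0 := fun k l hkl => by rw [hDF, hw k l hkl]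
  have cast_dot : ∀ x : ι → ℚ, ((x ⬝ᵥ B *ᵥ x : ℚ) : ℝ)
      = (fun i => (x i : ℝ)) ⬝ᵥ (B.map ((↑) : ℚ → ℝ)) *ᵥ (fun i => (x i : ℝ)) := by
    intro x
    simp only [dotProduct, Matrix.mulVec, Matrix.map_apply]
    push_cast
    ring
  have hDnn : ∀ k, 0 ≤ D k k := by
    intro k
    have h1 : D k k = (w k) ⬝ᵥ B *ᵥ (w k) := by
      rw [hDF k k, hFdef, Matrix.toBilin'_apply']
    have h2 := hpsd.dotProduct_mulVec_nonneg (fun i => ((w k i : ℚ) : ℝ))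
    have h3 : (0:ℝ) ≤ ((D k k : ℚ) : ℝ) := by
      rw [h1, cast_dot]
      simpa using h2
    exact_mod_cast h3
  have hBQ : B = (⅟P)ᵀ * D * ⅟P := by
    rw [Matrix.transpose_invOf, hDdef]
    simp only [Matrix.mul_assoc]
    rw [mul_invOf_self, Matrix.mul_one, ← Matrix.mul_assoc, invOf_mul_self, Matrix.one_mul]
  -- move to polynomials
  set φ : ℚ →+* MvPolynomial (Fin n) ℚ := (MvPolynomial.C : ℚ →+* MvPolynomial (Fin n) ℚ) with hφ
  set pv : ι → MvPolynomial (Fin n) ℚ := fun i => monomial (m i) (1:ℚ) with hpv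
  set QR : Matrix ι ι (MvPolynomial (Fin n) ℚ) := (⅟P).map φ with hQR
  set DR : Matrix ι ι (MvPolynomial (Fin n) ℚ) := D.map φ with hDR
  have hBmap : B.map ⇑φ = QRᵀ * DR * QR := by
    rw [hBQ, Matrix.map_mul, Matrix.map_mul, Matrix.transpose_map]
  have hf2 : f = ∑ i, ∑ j, (B.map ⇑φ) i j * (pv i * pv j) := by
    rw [hf]
    exact Finset.sum_congr rfl fun i _ => Finset.sum_congr rfl fun j _ => by
      rw [Matrix.map_apply, MvPolynomial.smul_eq_C_mul]
  have hDRoff : ∀ k l, k ≠ l → DR k l = 0 := fun k l hkl => by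
    rw [hDR, Matrix.map_apply, hDoff k l hkl, map_zero]
  have hf3 : f = ∑ k, φ (D k k) * (∑ i, QR k i * pv i)^2 := by
    rw [hf2, hBmap, gram_diag_identity QR DR hDRoff pv]
    rfl
  choose a ha using fun k => rat_four_squares (D k k) (hDnn k)
  set g : ι → MvPolynomial (Fin n) ℚ := fun k => ∑ i, QR k i * pv i with hg
  have hf4 : f = ∑ k, ∑ t, (φ (a k t) * g k)^2 := by
    rw [hf3]
    refine Finset.sum_congr rfl fun k _ => ?_
    rw [ha k, map_sum]
    rw [Finset.sum_mul]
    exact Finset.sum_congr rfl fun t _ => by rw [map_pow]; ring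
  refine ⟨Fintype.card (ι × Fin 4), fun s => φ (a ((Fintype.equivFin (ι × Fin 4)).symm s).1
    ((Fintype.equivFin (ι × Fin 4)).symm s).2) * g ((Fintype.equivFin (ι × Fin 4)).symm s).1, ?_⟩
  rw [Equiv.sum_comp (Fintype.equivFin (ι × Fin 4)).symm
    (fun pr : ι × Fin 4 => (φ (a pr.1 pr.2) * g pr.1)^2), Fintype.sum_prod_type]
  exact hf4

/-- Hillar's theorem as used in the paper: if a rational
polynomial f of degree 2d has a positive definite (hence invertible) real Gram
matrix with respect to the vector m of all monomials of degree ≤ d, then f has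
a rational Gram matrix; in particular f is a sum of squares of polynomials with
rational coefficients. -/
theorem rational_gram_matrix_of_posdef_gram (n d : ℕ)
    (f : MvPolynomial (Fin n) ℚ) (hdeg : f.totalDegree = 2 * d)
    (ι : Type) [Fintype ι] [DecidableEq ι]
    (m : ι → (Fin n →₀ ℕ))
    (hm_inj : Function.Injective m)
    (hm_deg : ∀ i, (m i).sum (fun _ e => e) ≤ d)
    (hm_all : ∀ s : Fin n →₀ ℕ, s.sum (fun _ e => e) ≤ d → ∃ i, m i = s)
    (A : Matrix ι ι ℝ) (hA : A.PosDef) (hAsym : A.IsSymm)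
    (hGram : MvPolynomial.map (algebraMap ℚ ℝ) f
      = ∑ i, ∑ j, A i j • (monomial (m i) (1 : ℝ) * monomial (m j) (1 : ℝ))) :
    (∃ B : Matrix ι ι ℚ, B.IsSymm ∧ (B.map ((↑) : ℚ → ℝ)).PosSemidef ∧
      f = ∑ i, ∑ j, B i j • (monomial (m i) (1 : ℚ) * monomial (m j) (1 : ℚ)))
    ∧ ∃ (k : ℕ) (p : Fin k → MvPolynomial (Fin n) ℚ), f = ∑ i, (p i) ^ 2 := by
  obtain ⟨B, hBsym, hBpsd, hfB⟩ := rational_gram_part1 n f ι m A hA hAsym hGram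
  exact ⟨⟨B, hBsym, hBpsd, hfB⟩, sos_of_rat_gram f m B hBsym hBpsd hfB⟩
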